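/- Let χ be a primitive Dirichlet character modulo q, let m be a positive integer, and let c be a positive integer with q ∣ c. Then Σ_{d ∈ (ℤ/cℤ)ˣ} χ(d)·e(md/c) = τ(χ) · Σ_{a ∣ gcd(c/q, m)} a·μ(c/(aq))·χ(c/(aq))·conj(χ)(m/a), where in the left-hand sum χ(d) is evaluated at the reduction of d modulo q, and conj(χ) denotes the complex conjugate character. -/

import Mathlib

open Finset Complex Real

namespace Stmt7

noncomputable def E (k n : ℕ) : ℂ := Complex.exp (2 * π * I * ((k : ℂ) / (n : ℂ)))

lemma E_eq (k n : ℕ) [NeZero n] : E k n = ZMod.stdAddChar ((k : ZMod n)) := by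
  have h : ((k : ℤ) : ZMod n) = ((k : ℕ) : ZMod n) := by push_cast; rfl
  rw [← h, ZMod.stdAddChar_coe, E]
  push_cast
  ring_nf

lemma sum_range_eq_sum_zmod {n : ℕ} [NeZero n] (f : ZMod n → ℂ) :
    ∑ d ∈ Finset.range n, f (d : ZMod n) = ∑ x : ZMod n, f x := by
  refine Finset.sum_nbij' (fun d => (d : ZMod n)) (fun x => x.val) ?_ ?_ ?_ ?_ ?_ <;>
    simp [ZMod.val_lt, ZMod.natCast_val, Finset.mem_range, Nat.mod_eq_of_lt]
  exact fun a ha => Nat.mod_eq_of_lt ha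

lemma sum_E (n m : ℕ) (hn : n ≠ 0) :
    ∑ h ∈ Finset.range n, E (m * h) n = if n ∣ m then (n : ℂ) else 0 := by
  haveI : NeZero n := ⟨hn⟩
  calc ∑ h ∈ Finset.range n, E (m * h) n
      = ∑ h ∈ Finset.range n, ZMod.stdAddChar ((h : ZMod n) * (m : ZMod n)) := by
        refine Finset.sum_congr rfl fun h _ => ?_
        rw [E_eq]; push_cast; rw [mul_comm]
    _ = ∑ x : ZMod n, ZMod.stdAddChar (x * (m : ZMod n)) :=
        sum_range_eq_sum_zmod (fun x => ZMod.stdAddChar (x * (m : ZMod n)))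
    _ = _ := by
        rw [AddChar.sum_mulShift _ (ZMod.isPrimitive_stdAddChar n)]
        simp [ZMod.natCast_eq_zero_iff, ZMod.card]

lemma gauss_eq (q : ℕ) [NeZero q] (χ : DirichletCharacter ℂ q) :
    ∑ d ∈ Finset.range q, χ (d : ZMod q) * E d q = gaussSum χ ZMod.stdAddChar := by
  rw [show gaussSum χ ZMod.stdAddChar = ∑ x : ZMod q, χ x * ZMod.stdAddChar x from rfl,
    ← sum_range_eq_sum_zmod (fun x => χ x * ZMod.stdAddChar x)]
  exact Finset.sum_congr rfl fun d _ => by rw [E_eq]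

lemma sep (q : ℕ) [NeZero q] (χ : DirichletCharacter ℂ q) (hχ : χ.IsPrimitive) (k : ℕ) :
    ∑ d ∈ Finset.range q, χ (d : ZMod q) * E (k * d) q
      = (starRingEnd ℂ) (χ (k : ZMod q)) * ∑ d ∈ Finset.range q, χ (d : ZMod q) * E d q := by
  have h1 : ∑ d ∈ Finset.range q, χ (d : ZMod q) * E (k * d) q
      = gaussSum χ ((ZMod.stdAddChar (N := q)).mulShift (k : ZMod q)) := by
    rw [show gaussSum χ ((ZMod.stdAddChar (N := q)).mulShift (k : ZMod q))
        = ∑ x : ZMod q, χ x * ((ZMod.stdAddChar (N := q)).mulShift (k : ZMod q)) x from rfl,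
      ← sum_range_eq_sum_zmod
        (fun x => χ x * ((ZMod.stdAddChar (N := q)).mulShift (k : ZMod q)) x)]
    refine Finset.sum_congr rfl fun d _ => ?_
    rw [E_eq, AddChar.mulShift_apply]
    push_cast
    rfl
  rw [h1, gaussSum_mulShift_of_isPrimitive _ hχ, gauss_eq]
  congr 1
  rw [← MulChar.star_apply', RCLike.star_def]

lemma inner_sum (q : ℕ) [NeZero q] (χ : DirichletCharacter ℂ q) (hχ : χ.IsPrimitive)
    (m n : ℕ) (hn : n ≠ 0) (hqn : q ∣ n) :
    ∑ f ∈ Finset.range n, χ (f : ZMod q) * E (m * f) n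
      = if (n / q) ∣ m then ((n / q : ℕ) : ℂ) *
          ((starRingEnd ℂ) (χ ((m / (n / q) : ℕ) : ZMod q)) *
            ∑ d ∈ Finset.range q, χ (d : ZMod q) * E d q)
        else 0 := by
  have hq0 : q ≠ 0 := NeZero.ne q
  set s := n / q with hs
  have hns : n = q * s := (Nat.mul_div_cancel' hqn).symm
  have hs0 : s ≠ 0 := by rintro h; rw [h, mul_zero] at hns; exact hn hns
  have hqC : (q : ℂ) ≠ 0 := Nat.cast_ne_zero.mpr hq0
  have hsC : (s : ℂ) ≠ 0 := Nat.cast_ne_zero.mpr hs0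
  -- step 1: reindex
  have reidx : ∑ f ∈ Finset.range n, χ (f : ZMod q) * E (m * f) n
      = ∑ p ∈ Finset.range q ×ˢ Finset.range s,
          χ ((p.1 + q * p.2 : ℕ) : ZMod q) * E (m * (p.1 + q * p.2)) n := by
    refine (Finset.sum_nbij' (fun p => p.1 + q * p.2) (fun f => (f % q, f / q))
      ?_ ?_ ?_ ?_ ?_).symm
    · intro p hp
      rw [Finset.mem_product, Finset.mem_range, Finset.mem_range] at hp
      rw [Finset.mem_range, hns]
      have h2 : p.2 + 1 ≤ s := hp.2
      have h3 := Nat.mul_le_mul_left q h2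
      rw [Nat.mul_succ] at h3
      show p.1 + q * p.2 < q * s
      omega
    · intro f hf
      rw [Finset.mem_range] at hf
      rw [Finset.mem_product, Finset.mem_range, Finset.mem_range]
      refine ⟨Nat.mod_lt _ (Nat.pos_of_ne_zero hq0), ?_⟩
      rw [Nat.div_lt_iff_lt_mul (Nat.pos_of_ne_zero hq0), Nat.mul_comm s q, ← hns]
      exact hf
    · intro p hp
      rw [Finset.mem_product, Finset.mem_range, Finset.mem_range] at hp
      have h1 : (p.1 + q * p.2) % q = p.1 := by
        rw [Nat.add_mul_mod_self_left, Nat.mod_eq_of_lt hp.1]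
      have h2 : (p.1 + q * p.2) / q = p.2 := by
        rw [Nat.add_mul_div_left _ _ (Nat.pos_of_ne_zero hq0), Nat.div_eq_of_lt hp.1]
        omega
      exact Prod.ext h1 h2
    · intro f hf
      simp [Nat.mod_add_div]
    · intro p hp
      rfl
  -- step 2: split the summand
  have split : ∀ p ∈ Finset.range q ×ˢ Finset.range s,
      χ ((p.1 + q * p.2 : ℕ) : ZMod q) * E (m * (p.1 + q * p.2)) n
        = (χ ((p.1 : ℕ) : ZMod q) * E (m * p.1) n) * E (m * p.2) s := by
    intro p _
    have hcast : ((p.1 + q * p.2 : ℕ) : ZMod q) = ((p.1 : ℕ) : ZMod q) := by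
      push_cast
      simp [ZMod.natCast_self]
    have hE : E (m * (p.1 + q * p.2)) n = E (m * p.1) n * E (m * p.2) s := by
      rw [E, E, E, ← Complex.exp_add]
      congr 1
      have hnC : (n : ℂ) = (q : ℂ) * (s : ℂ) := by rw [hns]; push_cast; ring
      rw [hnC]
      push_cast
      field_simp
    rw [hcast, hE]
    ring
  rw [reidx, Finset.sum_congr rfl split,
    show ∑ p ∈ Finset.range q ×ˢ Finset.range s,
        (χ ((p.1 : ℕ) : ZMod q) * E (m * p.1) n) * E (m * p.2) s
      = ∑ g ∈ Finset.range q, ∑ h ∈ Finset.range s,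
        (χ ((g : ℕ) : ZMod q) * E (m * g) n) * E (m * h) s from
      Finset.sum_product (Finset.range q) (Finset.range s)
        (fun p => (χ ((p.1 : ℕ) : ZMod q) * E (m * p.1) n) * E (m * p.2) s),
    ← Finset.sum_mul_sum]
  rw [sum_E s m hs0]
  by_cases hd : s ∣ m
  · rw [if_pos hd, if_pos hd]
    obtain ⟨m', hm'⟩ := hd
    have hmd : m / s = m' := by rw [hm', Nat.mul_div_cancel_left _ (Nat.pos_of_ne_zero hs0)]
    have hEq : ∀ g : ℕ, E (m * g) n = E (m' * g) q := by
      intro g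
      rw [E, E]
      congr 1
      have hnC : (n : ℂ) = (q : ℂ) * (s : ℂ) := by rw [hns]; push_cast; ring
      rw [hnC, hm']
      push_cast
      field_simp
    calc (∑ g ∈ Finset.range q, χ (g : ZMod q) * E (m * g) n) * (s : ℂ)
        = (∑ g ∈ Finset.range q, χ (g : ZMod q) * E (m' * g) q) * (s : ℂ) := by
          rw [Finset.sum_congr rfl fun g _ => by rw [hEq g]]
      _ = _ := by
          rw [sep q χ hχ m', hmd]
          ring
  · rw [if_neg hd, if_neg hd, mul_zero]

lemma moebius_sum (n : ℕ) (hn : n ≠ 0) :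
    ∑ e ∈ n.divisors, ((ArithmeticFunction.moebius e : ℤ) : ℂ)
      = if n = 1 then 1 else 0 := by
  have key := congrArg (fun f => f n) ArithmeticFunction.moebius_mul_coe_zeta
  simp only [ArithmeticFunction.coe_mul_zeta_apply, ArithmeticFunction.one_apply] at key
  have : ((∑ e ∈ n.divisors, ArithmeticFunction.moebius e : ℤ) : ℂ)
      = ((if n = 1 then 1 else 0 : ℤ) : ℂ) := by rw [key]
  rw [Int.cast_sum] at this
  rw [this]
  split_ifs <;> simp

lemma moebius_ind (d c : ℕ) (hc : c ≠ 0) :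
    (if Nat.Coprime d c then (1 : ℂ) else 0)
      = ∑ e ∈ c.divisors, if e ∣ d then ((ArithmeticFunction.moebius e : ℤ) : ℂ) else 0 := by
  rw [← Finset.sum_filter]
  have hfil : c.divisors.filter (· ∣ d) = (Nat.gcd d c).divisors := by
    ext e
    simp only [Finset.mem_filter, Nat.mem_divisors]
    constructor
    · rintro ⟨⟨hec, -⟩, hed⟩
      exact ⟨Nat.dvd_gcd hed hec, fun h => hc (Nat.eq_zero_of_gcd_eq_zero_right h)⟩
    · rintro ⟨hg, -⟩
      exact ⟨⟨hg.trans (Nat.gcd_dvd_right d c), hc⟩, hg.trans (Nat.gcd_dvd_left d c)⟩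
  rw [hfil, moebius_sum _ (fun h => hc (Nat.eq_zero_of_gcd_eq_zero_right h))]

lemma reindex_mul (c e : ℕ) (hc : c ≠ 0) (he : e ∣ c) (F : ℕ → ℂ) :
    ∑ d ∈ (Finset.range c).filter (fun d => e ∣ d), F d
      = ∑ f ∈ Finset.range (c / e), F (e * f) := by
  have he0 : e ≠ 0 := by rintro rfl; exact hc (Nat.eq_zero_of_zero_dvd he)
  refine (Finset.sum_nbij' (fun f => e * f) (fun d => d / e) ?_ ?_ ?_ ?_ ?_).symm
  · intro f hf
    rw [Finset.mem_range] at hf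
    rw [Finset.mem_filter, Finset.mem_range]
    exact ⟨(Nat.lt_div_iff_mul_lt' he f).mp hf, ⟨f, rfl⟩⟩
  · intro d hd
    rw [Finset.mem_filter, Finset.mem_range] at hd
    rw [Finset.mem_range]
    exact Nat.div_lt_div_of_lt_of_dvd he hd.1
  · intro f hf
    exact Nat.mul_div_cancel_left f (Nat.pos_of_ne_zero he0)
  · intro d hd
    rw [Finset.mem_filter] at hd
    exact Nat.mul_div_cancel' hd.2
  · intro f hf
    rfl

lemma E_div (m c e f : ℕ) (hc : c ≠ 0) (he : e ∣ c) :
    E (m * (e * f)) c = E (m * f) (c / e) := by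
  have he0 : e ≠ 0 := by rintro rfl; exact hc (Nat.eq_zero_of_zero_dvd he)
  have hce : c = e * (c / e) := (Nat.mul_div_cancel' he).symm
  have hd0 : c / e ≠ 0 := by rintro h; rw [h, Nat.mul_zero] at hce; exact hc hce
  rw [E, E]
  congr 1
  rw [show (c : ℂ) = (e : ℂ) * ((c / e : ℕ) : ℂ) by exact_mod_cast congrArg Nat.cast hce]
  have heC : (e : ℂ) ≠ 0 := Nat.cast_ne_zero.mpr he0
  have hdC : ((c / e : ℕ) : ℂ) ≠ 0 := Nat.cast_ne_zero.mpr hd0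
  push_cast
  field_simp

end Stmt7

open Stmt7 in
/-- For a primitive Dirichlet character `χ` mod `q`, a positive integer `m`
and `c > 0` with `q ∣ c`:
`∑_{d ∈ (ℤ/cℤ)ˣ} χ d · e(md/c)
  = τ(χ) · ∑_{a ∣ gcd(c/q, m)} a · μ(c/(aq)) · χ(c/(aq)) · χ̄(m/a)`. -/
theorem stmt_7 (q : ℕ) (χ : DirichletCharacter ℂ q) (hprim : χ.IsPrimitive)
    (m c : ℕ) (hm : 0 < m) (hc : 0 < c) (hqc : q ∣ c) :
    ∑ d ∈ (Finset.range c).filter (fun d => Nat.Coprime d c),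
        χ (d : ZMod q) * Complex.exp (2 * π * I * (((m * d : ℕ) : ℂ) / (c : ℂ))) =
      (∑ d ∈ Finset.range q, χ (d : ZMod q) * Complex.exp (2 * π * I * ((d : ℂ) / (q : ℂ)))) *
        ∑ a ∈ (Nat.gcd (c / q) m).divisors,
          (a : ℂ) * ((ArithmeticFunction.moebius (c / (a * q)) : ℤ) : ℂ) *
            χ ((c / (a * q) : ℕ) : ZMod q) *
            (starRingEnd ℂ) (χ ((m / a : ℕ) : ZMod q)) := by
  have hc0 : c ≠ 0 := hc.ne'
  have hq0 : q ≠ 0 := by rintro rfl; exact hc0 (Nat.eq_zero_of_zero_dvd hqc)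
  haveI : NeZero q := ⟨hq0⟩
  have hcr : c = q * (c / q) := (Nat.mul_div_cancel' hqc).symm
  have hr0 : c / q ≠ 0 := by
    rintro h; rw [h, Nat.mul_zero] at hcr; exact hc0 hcr
  show ∑ d ∈ (Finset.range c).filter (fun d => Nat.Coprime d c), χ (d : ZMod q) * E (m * d) c
      = (∑ d ∈ Finset.range q, χ (d : ZMod q) * E d q) * _
  set r := c / q with hrdef
  set T : ℂ := ∑ d ∈ Finset.range q, χ (d : ZMod q) * E d q with hTdef
  calc ∑ d ∈ (Finset.range c).filter (fun d => Nat.Coprime d c), χ (d : ZMod q) * E (m * d) c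
      = ∑ d ∈ Finset.range c,
          (∑ e ∈ c.divisors, if e ∣ d then ((ArithmeticFunction.moebius e : ℤ) : ℂ) else 0) *
            (χ (d : ZMod q) * E (m * d) c) := by
        rw [Finset.sum_filter]
        refine Finset.sum_congr rfl fun d _ => ?_
        rw [← moebius_ind d c hc0]
        split_ifs <;> simp
    _ = ∑ e ∈ c.divisors, ∑ d ∈ Finset.range c,
          (if e ∣ d then ((ArithmeticFunction.moebius e : ℤ) : ℂ) *
            (χ (d : ZMod q) * E (m * d) c) else 0) := by
        simp_rw [Finset.sum_mul, ite_mul, zero_mul]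
        exact Finset.sum_comm
    _ = ∑ e ∈ c.divisors, ((ArithmeticFunction.moebius e : ℤ) : ℂ) *
          (χ (e : ZMod q) * ∑ f ∈ Finset.range (c / e), χ (f : ZMod q) * E (m * f) (c / e)) := by
        refine Finset.sum_congr rfl fun e he => ?_
        obtain ⟨hec, -⟩ := Nat.mem_divisors.mp he
        rw [← Finset.sum_filter, reindex_mul c e hc0 hec
          (fun d => ((ArithmeticFunction.moebius e : ℤ) : ℂ) * (χ (d : ZMod q) * E (m * d) c)),
          Finset.mul_sum, Finset.mul_sum]
        refine Finset.sum_congr rfl fun f _ => ?_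
        rw [E_div m c e f hc0 hec]
        have hcast : ((e * f : ℕ) : ZMod q) = ((e : ℕ) : ZMod q) * ((f : ℕ) : ZMod q) := by
          push_cast; ring
        rw [hcast, map_mul]
        ring
    _ = ∑ e ∈ r.divisors, ((ArithmeticFunction.moebius e : ℤ) : ℂ) *
          (χ (e : ZMod q) * ∑ f ∈ Finset.range (c / e), χ (f : ZMod q) * E (m * f) (c / e)) := by
        refine (Finset.sum_subset (Nat.divisors_subset_of_dvd hc0 (Nat.div_dvd_of_dvd hqc))
          fun e hec her => ?_).symm
        have hχe : χ ((e : ℕ) : ZMod q) = 0 := by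
          refine χ.map_nonunit ?_
          rw [ZMod.isUnit_iff_coprime]
          intro hcop
          refine her (Nat.mem_divisors.mpr ⟨?_, hr0⟩)
          obtain ⟨hec', -⟩ := Nat.mem_divisors.mp hec
          refine (Nat.Coprime.dvd_of_dvd_mul_left hcop ?_)
          rwa [← hcr]
        rw [hχe]
        ring
    _ = ∑ e ∈ r.divisors, ((ArithmeticFunction.moebius e : ℤ) : ℂ) *
          (χ (e : ZMod q) * (if (r / e) ∣ m then ((r / e : ℕ) : ℂ) *
            ((starRingEnd ℂ) (χ ((m / (r / e) : ℕ) : ZMod q)) * T) else 0)) := by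
        refine Finset.sum_congr rfl fun e he => ?_
        obtain ⟨her, -⟩ := Nat.mem_divisors.mp he
        have hce : c / e = q * (r / e) := by
          rw [hcr, Nat.mul_div_assoc q her]
        have hre0 : r / e ≠ 0 := by
          have hre : r = e * (r / e) := (Nat.mul_div_cancel' her).symm
          rintro h
          rw [h, Nat.mul_zero] at hre
          exact hr0 hre
        have hce0 : c / e ≠ 0 := by rw [hce]; exact Nat.mul_ne_zero hq0 hre0
        have hq_dvd : q ∣ c / e := ⟨r / e, hce⟩
        have hdiv : (c / e) / q = r / e := by
          rw [hce, Nat.mul_div_cancel_left _ (Nat.pos_of_ne_zero hq0)]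
        rw [inner_sum q χ hprim m (c / e) hce0 hq_dvd, hdiv]
    _ = ∑ e ∈ r.divisors, (fun a => ((ArithmeticFunction.moebius (r / a) : ℤ) : ℂ) *
          (χ ((r / a : ℕ) : ZMod q) * (if a ∣ m then ((a : ℕ) : ℂ) *
            ((starRingEnd ℂ) (χ ((m / a : ℕ) : ZMod q)) * T) else 0))) (r / e) := by
        refine Finset.sum_congr rfl fun e he => ?_
        obtain ⟨her, -⟩ := Nat.mem_divisors.mp he
        simp only [Nat.div_div_self her hr0]
    _ = ∑ a ∈ r.divisors, ((ArithmeticFunction.moebius (r / a) : ℤ) : ℂ) *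
          (χ ((r / a : ℕ) : ZMod q) * (if a ∣ m then ((a : ℕ) : ℂ) *
            ((starRingEnd ℂ) (χ ((m / a : ℕ) : ZMod q)) * T) else 0)) :=
        Nat.sum_div_divisors r (fun a => ((ArithmeticFunction.moebius (r / a) : ℤ) : ℂ) *
          (χ ((r / a : ℕ) : ZMod q) * (if a ∣ m then ((a : ℕ) : ℂ) *
            ((starRingEnd ℂ) (χ ((m / a : ℕ) : ZMod q)) * T) else 0)))
    _ = ∑ a ∈ (Nat.gcd r m).divisors, ((ArithmeticFunction.moebius (r / a) : ℤ) : ℂ) *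
          (χ ((r / a : ℕ) : ZMod q) * (((a : ℕ) : ℂ) *
            ((starRingEnd ℂ) (χ ((m / a : ℕ) : ZMod q)) * T))) := by
        simp_rw [mul_ite, mul_zero, ← Finset.sum_filter]
        refine Finset.sum_congr ?_ fun _ _ => rfl
        ext a
        simp only [Finset.mem_filter, Nat.mem_divisors]
        constructor
        · rintro ⟨⟨har, -⟩, ham⟩
          exact ⟨Nat.dvd_gcd har ham, fun h => hr0 (Nat.eq_zero_of_gcd_eq_zero_left h)⟩
        · rintro ⟨hg, -⟩
          exact ⟨⟨hg.trans (Nat.gcd_dvd_left r m), hr0⟩, hg.trans (Nat.gcd_dvd_right r m)⟩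
    _ = T * ∑ a ∈ (Nat.gcd r m).divisors,
          (a : ℂ) * ((ArithmeticFunction.moebius (c / (a * q)) : ℤ) : ℂ) *
            χ ((c / (a * q) : ℕ) : ZMod q) *
            (starRingEnd ℂ) (χ ((m / a : ℕ) : ZMod q)) := by
        rw [Finset.mul_sum]
        refine Finset.sum_congr rfl fun a ha => ?_
        have hra : c / (a * q) = r / a := by
          rw [Nat.mul_comm a q, ← Nat.div_div_eq_div_mul]
        rw [hra]
        ring
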